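/- Any 3-dimensional subspace N of W × F_16 with d_S(N, G(a_0,a_1)) ≥ 4 for all a_0,a_1 ∈ F_16 must satisfy dim(N ∩ ({0} × F_16)) ≥ 1; i.e., a (7,M,4;3) code containing the full lifted Gabidulin code can only be extended by subspaces meeting the special solid S in at least a point. -/

import Mathlib

/-- The field `F_16`, a `4`-dimensional vector space over `F_2`. -/
abbrev F16 := GaloisField 2 4

/-- The `F_2`-linear endomorphism of `F_16` induced by `a_0 x + a_1 x^2`. -/
noncomputable def lmap (a0 a1 : F16) : F16 →ₗ[ZMod 2] F16 where
  toFun x := a0 * x + a1 * x ^ 2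
  map_add' x y := by
    have h : (x + y) ^ 2 = x ^ 2 + y ^ 2 := CharTwo.add_sq x y
    show a0 * (x + y) + a1 * (x + y) ^ 2 = a0 * x + a1 * x ^ 2 + (a0 * y + a1 * y ^ 2)
    rw [h]; ring
  map_smul' c x := by
    have hc : c = 0 ∨ c = 1 := by revert c; decide
    rcases hc with rfl | rfl <;> simp

/-- The codeword `G(a_0, a_1) = {(x, a_0 x + a_1 x^2) : x ∈ W}`, as a subspace of
`W × F_16`. -/
noncomputable def Gc (W : Submodule (ZMod 2) F16) (a0 a1 : F16) :
    Submodule (ZMod 2) (↥W × F16) :=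
  LinearMap.graph ((lmap a0 a1).comp W.subtype)

/-- The special solid `S = {0} × F_16` inside `W × F_16`. -/
noncomputable def specialSolid (W : Submodule (ZMod 2) F16) :
    Submodule (ZMod 2) (↥W × F16) :=
  (⊥ : Submodule (ZMod 2) ↥W).prod (⊤ : Submodule (ZMod 2) F16)

lemma finrank_Gc (W : Submodule (ZMod 2) F16) (hW : Module.finrank (ZMod 2) W = 3)
    (a0 a1 : F16) : Module.finrank (ZMod 2) (Gc W a0 a1) = 3 := by
  rw [Gc, LinearMap.graph_eq_range_prod]
  rw [LinearMap.finrank_range_of_inj, hW]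
  intro x y h
  simpa using congrArg Prod.fst h

lemma solve_interp (u v p q : F16) (hu : u ≠ 0) (hv : v ≠ 0) (huv : u ≠ v) :
    ∃ a0 a1 : F16, a0 * u + a1 * u ^ 2 = p ∧ a0 * v + a1 * v ^ 2 = q := by
  have hsum : u + v ≠ 0 := by
    rw [← CharTwo.sub_eq_add, sub_ne_zero]; exact huv
  have hD : u * v * (u + v) ≠ 0 := mul_ne_zero (mul_ne_zero hu hv) hsum
  have h2 : (2 : F16) = 0 := CharTwo.two_eq_zero
  refine ⟨(p * v ^ 2 + q * u ^ 2) / (u * v * (u + v)),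
          (p * v + q * u) / (u * v * (u + v)), ?_, ?_⟩
  · field_simp
    linear_combination (q * u ^ 2) * h2
  · field_simp
    linear_combination (p * v ^ 2) * h2

set_option maxHeartbeats 1000000 in
/-- Any plane at subspace distance at least `4` from all codewords of the lifted Gabidulin
code must meet the special solid `S` in at least a point. -/
theorem extension_meets_special_solid (W : Submodule (ZMod 2) F16)
    (hW : Module.finrank (ZMod 2) W = 3) (N : Submodule (ZMod 2) (↥W × F16))
    (hN : Module.finrank (ZMod 2) N = 3)
    (hdist : ∀ a0 a1 : F16,
      4 ≤ Module.finrank (ZMod 2) ↥(N ⊔ Gc W a0 a1) -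
            Module.finrank (ZMod 2) ↥(N ⊓ Gc W a0 a1)) :
    1 ≤ Module.finrank (ZMod 2) ↥(N ⊓ specialSolid W) := by
  by_contra h
  push_neg at h
  have hr : Module.finrank (ZMod 2) ↥(N ⊓ specialSolid W) = 0 := by omega
  have hbot : N ⊓ specialSolid W = ⊥ := Submodule.finrank_eq_zero.mp hr
  -- any element of N with zero first coordinate is zero
  have key : ∀ x : ↥W × F16, x ∈ N → x.1 = 0 → x = 0 := by
    intro x hxN hx1
    have hxS : x ∈ specialSolid W := ⟨by simp [hx1], trivial⟩
    have : x ∈ N ⊓ specialSolid W := ⟨hxN, hxS⟩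
    rwa [hbot, Submodule.mem_bot] at this
  -- pick a basis of N
  let b : Module.Basis (Fin 3) (ZMod 2) N := Module.finBasisOfFinrankEq (ZMod 2) N hN
  set n1 : ↥W × F16 := (b 0).val with hn1
  set n2 : ↥W × F16 := (b 1).val with hn2
  have hn1N : n1 ∈ N := (b 0).2
  have hn2N : n2 ∈ N := (b 1).2
  have hb01 : n1 ≠ n2 := by
    intro h'
    exact (by decide : (0 : Fin 3) ≠ 1) (b.injective (Subtype.ext h'))
  have hn1ne : n1 ≠ 0 := by
    intro h'
    exact b.ne_zero 0 (Subtype.ext h')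
  have hn2ne : n2 ≠ 0 := by
    intro h'
    exact b.ne_zero 1 (Subtype.ext h')
  -- first coordinates
  have hw1 : n1.1 ≠ 0 := fun h' => hn1ne (key n1 hn1N h')
  have hw2 : n2.1 ≠ 0 := fun h' => hn2ne (key n2 hn2N h')
  have hw12 : n1.1 ≠ n2.1 := by
    intro h'
    have hdiff : n1 - n2 ∈ N := N.sub_mem hn1N hn2N
    have : n1 - n2 = 0 := key _ hdiff (by simp [Prod.fst_sub, h'])
    exact hb01 (sub_eq_zero.mp this)
  -- coerce to F16
  set u : F16 := (n1.1 : F16) with hu_def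
  set v : F16 := (n2.1 : F16) with hv_def
  have hu : u ≠ 0 := fun h' => hw1 (Subtype.ext h')
  have hv : v ≠ 0 := fun h' => hw2 (Subtype.ext h')
  have huv : u ≠ v := fun h' => hw12 (Subtype.ext h')
  obtain ⟨a0, a1, he1, he2⟩ := solve_interp u v n1.2 n2.2 hu hv huv
  -- membership in the codeword
  have hg1 : n1 ∈ Gc W a0 a1 := by
    rw [Gc, LinearMap.mem_graph_iff]
    exact (he1.symm : n1.2 = a0 * u + a1 * u ^ 2)
  have hg2 : n2 ∈ Gc W a0 a1 := by
    rw [Gc, LinearMap.mem_graph_iff]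
    exact (he2.symm : n2.2 = a0 * v + a1 * v ^ 2)
  -- n1, n2 linearly independent
  have hind : LinearIndependent (ZMod 2) ![n1, n2] := by
    rw [LinearIndependent.pair_iff]
    intro s t hst
    fin_cases s <;> fin_cases t
    · exact ⟨rfl, rfl⟩
    · exact absurd (by have hst2 : (0 : ZMod 2) • n1 + (1 : ZMod 2) • n2 = 0 := hst; simpa using hst2) hn2ne
    · exact absurd (by have hst2 : (1 : ZMod 2) • n1 + (0 : ZMod 2) • n2 = 0 := hst; simpa using hst2) hn1ne
    · exfalso
      apply hb01
      have hst' : n1 + n2 = 0 := by have hst2 : (1 : ZMod 2) • n1 + (1 : ZMod 2) • n2 = 0 := hst; simpa using hst2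
      have h2 : n2 + n2 = 0 := by
        have h20 : (2 : ZMod 2) = 0 := by decide
        have := two_smul (ZMod 2) n2
        rw [h20, zero_smul] at this
        exact this.symm
      have : n1 + n2 = n2 + n2 := by rw [hst', h2]
      exact add_right_cancel this
  -- the spanned plane
  have hspan : Submodule.span (ZMod 2) {n1, n2} ≤ N ⊓ Gc W a0 a1 := by
    rw [Submodule.span_le]
    rintro x (rfl | rfl)
    · exact ⟨hn1N, hg1⟩
    · exact ⟨hn2N, hg2⟩
  have hspanrank : Module.finrank (ZMod 2) (Submodule.span (ZMod 2) {n1, n2}) = 2 := by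
    have hr2 := finrank_span_eq_card (R := ZMod 2) hind
    have hrange : Set.range ![n1, n2] = {n1, n2} := by
      ext x
      simp [Fin.exists_fin_two, or_comm]
    rw [hrange] at hr2
    simpa using hr2
  have hinf : 2 ≤ Module.finrank (ZMod 2) ↥(N ⊓ Gc W a0 a1) := by
    have := Submodule.finrank_mono hspan
    omega
  have hsum := Submodule.finrank_sup_add_finrank_inf_eq N (Gc W a0 a1)
  rw [hN, finrank_Gc W hW] at hsum
  have := hdist a0 a1
  omega
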